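/- Let 0 < ϑ < 1 and r > ϑ. Define f(q) = min{q, ϑ + (√q − √r)²} for 0 < q < r. Then f is maximized over q ∈ (0, r) at q = (ϑ + r)²/(4r), with maximum value (ϑ + r)²/(4r). -/

import Mathlib

open Real Set

theorem stmt0 (ϑ r : ℝ) (hϑ0 : 0 < ϑ) (hϑ1 : ϑ < 1) (hr : ϑ < r) :
    (ϑ + r) ^ 2 / (4 * r) ∈ Set.Ioo (0 : ℝ) r ∧
    IsMaxOn (fun q : ℝ => min q (ϑ + (Real.sqrt q - Real.sqrt r) ^ 2))
      (Set.Ioo 0 r) ((ϑ + r) ^ 2 / (4 * r)) ∧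
    min ((ϑ + r) ^ 2 / (4 * r))
        (ϑ + (Real.sqrt ((ϑ + r) ^ 2 / (4 * r)) - Real.sqrt r) ^ 2)
      = (ϑ + r) ^ 2 / (4 * r) := by
  have hr0 : (0 : ℝ) < r := hϑ0.trans hr
  have hsr : Real.sqrt r ^ 2 = r := Real.sq_sqrt hr0.le
  have hsrpos : 0 < Real.sqrt r := Real.sqrt_pos.2 hr0
  have hmem : (ϑ + r) ^ 2 / (4 * r) ∈ Set.Ioo (0 : ℝ) r := by
    constructor
    · positivity
    · rw [div_lt_iff₀ (by positivity)]
      nlinarith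
  have hs : Real.sqrt ((ϑ + r) ^ 2 / (4 * r)) = (ϑ + r) / (2 * Real.sqrt r) := by
    rw [show (ϑ + r) ^ 2 / (4 * r) = ((ϑ + r) / (2 * Real.sqrt r)) ^ 2 by
      rw [div_pow, mul_pow, hsr]; ring]
    exact Real.sqrt_sq (by positivity)
  have hkey : ϑ + (Real.sqrt ((ϑ + r) ^ 2 / (4 * r)) - Real.sqrt r) ^ 2
      = (ϑ + r) ^ 2 / (4 * r) := by
    have hsub : (ϑ + r) / (2 * Real.sqrt r) - Real.sqrt r = (ϑ - r) / (2 * Real.sqrt r) := by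
      field_simp
      nlinarith [Real.mul_self_sqrt hr0.le]
    rw [hs, hsub, div_pow, mul_pow, hsr]
    field_simp
    ring
  refine ⟨hmem, ?_, by rw [hkey, min_self]⟩
  intro q hq
  simp only [Set.mem_setOf_eq, hkey, min_self]
  rcases le_or_gt q ((ϑ + r) ^ 2 / (4 * r)) with h | h
  · exact le_trans (min_le_left _ _) h
  · refine le_trans (min_le_right _ _) ?_
    rw [← hkey]
    have hq0 : 0 < q := hq.1
    have h1 : Real.sqrt ((ϑ + r) ^ 2 / (4 * r)) ≤ Real.sqrt q := Real.sqrt_le_sqrt h.le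
    have h2 : Real.sqrt q ≤ Real.sqrt r := Real.sqrt_le_sqrt hq.2.le
    nlinarith [h1, h2, Real.sqrt_nonneg ((ϑ + r) ^ 2 / (4 * r))]
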